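/- Let P be a finite partition of unity in C(X). Then h_Σ(P) = sup_{ε>0} inf_F inf_{δ>0} limsup_{i→∞} (1/d_i) log N_ε(Hom(P,F,δ,σ_i), ρ_{P,∞}), where ρ_{P,∞}(φ,ψ) = max_{p∈P}‖φ(p) − ψ(p)‖_∞ and F ranges over nonempty finite subsets of G. -/

import Mathlib

open MeasureTheory Filter
open scoped ENNReal ComplexOrder

noncomputable section

namespace Sofic

/-- The ℓ²-norm on `ℂ^d` with respect to the uniform probability measure `ζ`. -/
def l2 (d : ℕ) (v : Fin d → ℂ) : ℝ :=
  Real.sqrt ((∑ k, ‖v k‖ ^ 2) / d)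

/-- The sup-norm on `ℂ^d`. -/
def linf (d : ℕ) (v : Fin d → ℂ) : ℝ := ⨆ k, ‖v k‖

/-- The uniform probability state `ζ` on `ℂ^d`. -/
def unif (d : ℕ) (v : Fin d → ℂ) : ℂ := (∑ k, v k) / d

/-- The induced action of a permutation of `{1,…,d}` on `ℂ^d`: `σ_s(f) = f ∘ σ_s⁻¹`. -/
def permAct {d : ℕ} (π : Equiv.Perm (Fin d)) (v : Fin d → ℂ) : Fin d → ℂ :=
  fun k => v (π⁻¹ k)

/-- `N_ε(S,ρ)`: the maximal cardinality of a finite `ε`-separated subset of `S` with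
respect to the pseudometric `ρ`.  (For `ε = 0` this is the cardinality modulo the relation
of zero distance.) -/
def sepNum {Y : Type*} (S : Set Y) (ρ : Y → Y → ℝ) (ε : ℝ) : ℕ∞ :=
  ⨆ t ∈ {t : Finset Y | ↑t ⊆ S ∧ ∀ x ∈ t, ∀ y ∈ t, x ≠ y → ε < ρ x y}, (t.card : ℕ∞)

/-- Extended logarithm of an extended natural number: `log 0 = -∞`, `log ∞ = ∞`. -/
def elog (n : ℕ∞) : EReal :=
  if n = ⊤ then (⊤ : EReal) else if n = 0 then (⊥ : EReal)
  else ((Real.log n.toNat : ℝ) : EReal)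

/-- A sofic approximation sequence `Σ = {σ_i : G → Sym(d_i)}` for a countable group `G`. -/
structure SoficApprox (G : Type*) [Group G] where
  d : ℕ → ℕ
  σ : ∀ i, G → Equiv.Perm (Fin (d i))
  d_pos : ∀ i, 0 < d i
  d_tendsto : Tendsto d atTop atTop
  approx_mul : ∀ s t : G, Tendsto
    (fun i => (({k : Fin (d i) | σ i (s * t) k = σ i s (σ i t k)} : Set (Fin (d i))).ncard : ℝ)
      / d i) atTop (nhds 1)
  approx_free : ∀ s t : G, s ≠ t → Tendsto
    (fun i => (({k : Fin (d i) | σ i s k ≠ σ i t k} : Set (Fin (d i))).ncard : ℝ)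
      / d i) atTop (nhds 1)

/-- A countable group is sofic if it admits a sofic approximation sequence. -/
def IsSofic (G : Type*) [Group G] : Prop := Nonempty (SoficApprox G)

variable {G : Type*} [Group G] {X : Type*} [TopologicalSpace X]

/-- The action `α_s(f) = f ∘ s⁻¹` of `G` on `C(X)` induced by a continuous action `T` of
`G` on `X`. -/
def alphaC (T : G → X → X) (hc : ∀ s, Continuous (T s)) (s : G) (f : C(X, ℂ)) : C(X, ℂ) :=
  f.comp ⟨T s⁻¹, hc s⁻¹⟩

/-- A real-valued continuous function viewed as an element of `C(X,ℂ)`. -/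
def cplx (f : C(X, ℝ)) : C(X, ℂ) :=
  ⟨fun x => (f x : ℂ), Complex.continuous_ofReal.comp f.continuous⟩

/-- The pseudometric `ρ_S` on unital homomorphisms `C(X) → ℂ^d` associated to a sequence
`S = {p_n}_{n≥1}` in the unit ball of `C_ℝ(X)` (here `p n` is `p_{n+1}`). -/
def rhoSeqC {d : ℕ} (p : ℕ → C(X, ℝ)) (φ ψ : C(X, ℂ) →ₐ[ℂ] (Fin d → ℂ)) : ℝ :=
  ∑' n : ℕ, (1 / 2) ^ (n + 1) * l2 d (φ (cplx (p n)) - ψ (cplx (p n)))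

/-- `Hom(S,F,δ,σ)` (Definition 4.1): unital homomorphisms `φ : C(X) → ℂ^d` such that
`Σ_n 2^{-n} ‖φ(α_s(p_n)) − σ_s(φ(p_n))‖₂ < δ` for all `s ∈ F`. -/
def HomTop (T : G → X → X) (hc : ∀ s, Continuous (T s)) (p : ℕ → C(X, ℝ))
    (F : Finset G) (δ : ℝ) {d : ℕ} (σ : G → Equiv.Perm (Fin d)) :
    Set (C(X, ℂ) →ₐ[ℂ] (Fin d → ℂ)) :=
  {φ | ∀ s ∈ F,
    ∑' n : ℕ, (1 / 2) ^ (n + 1) *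
      l2 d (φ (alphaC T hc s (cplx (p n))) - permAct (σ s) (φ (cplx (p n)))) < δ}

/-- The topological entropy `h_Σ(S)` of a sequence `S` in the unit ball of `C_ℝ(X)`
(Definition 4.2). -/
def hTop (T : G → X → X) (hc : ∀ s, Continuous (T s)) (SA : SoficApprox G)
    (p : ℕ → C(X, ℝ)) : EReal :=
  ⨆ ε : {ε : ℝ // 0 < ε}, ⨅ F : {F : Finset G // F.Nonempty}, ⨅ δ : {δ : ℝ // 0 < δ},
    limsup (fun i => ((((SA.d i : ℝ))⁻¹ : ℝ) : EReal) *
      elog (sepNum (HomTop T hc p (F : Finset G) (δ : ℝ) (SA.σ i)) (rhoSeqC p) (ε : ℝ)))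
      atTop

/-- A sequence in the unit ball of `C_ℝ(X)` is dynamically generating if it is not
contained in any proper `G`-invariant closed unital *-subalgebra of `C(X)`. -/
def DynGenTop (T : G → X → X) (hc : ∀ s, Continuous (T s)) (p : ℕ → C(X, ℝ)) : Prop :=
  ∀ A : StarSubalgebra ℂ C(X, ℂ), IsClosed (A : Set C(X, ℂ)) →
    (∀ (s : G) f, f ∈ A → alphaC T hc s f ∈ A) → (∀ n, cplx (p n) ∈ A) → A = ⊤

/-- The pseudometric `ρ_P(φ,ψ) = max_{p ∈ P} ‖φ(p) − ψ(p)‖₂` for a finite partition of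
unity `P` in `C(X)`. -/
def rhoPartC {n d : ℕ} (P : Fin n → C(X, ℂ)) (φ ψ : C(X, ℂ) →ₐ[ℂ] (Fin d → ℂ)) : ℝ :=
  ⨆ i : Fin n, l2 d (φ (P i) - ψ (P i))

/-- The pseudometric `ρ_{P,∞}(φ,ψ) = max_{p ∈ P} ‖φ(p) − ψ(p)‖_∞`. -/
def rhoPartCinf {n d : ℕ} (P : Fin n → C(X, ℂ)) (φ ψ : C(X, ℂ) →ₐ[ℂ] (Fin d → ℂ)) : ℝ :=
  ⨆ i : Fin n, linf d (φ (P i) - ψ (P i))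

/-- `Hom(P,F,δ,σ)` (Definition 4.7) for a finite partition of unity `P` in `C(X)`. -/
def HomTopP (T : G → X → X) (hc : ∀ s, Continuous (T s)) {n : ℕ} (P : Fin n → C(X, ℂ))
    (F : Finset G) (δ : ℝ) {d : ℕ} (σ : G → Equiv.Perm (Fin d)) :
    Set (C(X, ℂ) →ₐ[ℂ] (Fin d → ℂ)) :=
  {φ | ∀ i : Fin n, ∀ s ∈ F,
    l2 d (φ (alphaC T hc s (P i)) - permAct (σ s) (φ (P i))) < δ}

/-- The topological entropy `h_Σ(P)` of a finite partition of unity `P` in `C(X)`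
(Definition 4.7). -/
def hTopP (T : G → X → X) (hc : ∀ s, Continuous (T s)) (SA : SoficApprox G) {n : ℕ}
    (P : Fin n → C(X, ℂ)) : EReal :=
  ⨆ ε : {ε : ℝ // 0 < ε}, ⨅ F : {F : Finset G // F.Nonempty}, ⨅ δ : {δ : ℝ // 0 < δ},
    limsup (fun i => ((((SA.d i : ℝ))⁻¹ : ℝ) : EReal) *
      elog (sepNum (HomTopP T hc P (F : Finset G) (δ : ℝ) (SA.σ i)) (rhoPartC P) (ε : ℝ)))
      atTop


/-! ### Auxiliary lemmas -/

section Aux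

open Finset

lemma l2_nonneg (d : ℕ) (v : Fin d → ℂ) : 0 ≤ l2 d v := Real.sqrt_nonneg _

lemma linf_nonneg (d : ℕ) (v : Fin d → ℂ) : 0 ≤ linf d v :=
  Real.iSup_nonneg fun _ => norm_nonneg _

lemma norm_le_linf (d : ℕ) (v : Fin d → ℂ) (k : Fin d) : ‖v k‖ ≤ linf d v :=
  le_ciSup (f := fun k => ‖v k‖) (Set.Finite.bddAbove (Set.finite_range _)) k

lemma l2_le_linf (d : ℕ) (v : Fin d → ℂ) : l2 d v ≤ linf d v := by
  rcases Nat.eq_zero_or_pos d with hd | hd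
  · subst hd
    have : l2 0 v = 0 := by simp [l2]
    rw [this]; exact linf_nonneg _ _
  · have h1 : (∑ k, ‖v k‖ ^ 2) / d ≤ (linf d v) ^ 2 := by
      rw [div_le_iff₀ (by positivity)]
      calc ∑ k, ‖v k‖ ^ 2 ≤ ∑ _k : Fin d, (linf d v) ^ 2 :=
            Finset.sum_le_sum fun k _ => pow_le_pow_left₀ (norm_nonneg _) (norm_le_linf d v k) 2
        _ = (linf d v) ^ 2 * d := by simp [mul_comm]
    calc l2 d v ≤ Real.sqrt ((linf d v) ^ 2) := Real.sqrt_le_sqrt h1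
      _ = linf d v := Real.sqrt_sq (linf_nonneg d v)

lemma l2_sub_comm (d : ℕ) (v w : Fin d → ℂ) : l2 d (v - w) = l2 d (w - v) := by
  unfold l2
  congr 1
  congr 1
  apply Finset.sum_congr rfl
  intro k _
  rw [Pi.sub_apply, Pi.sub_apply, norm_sub_rev]

lemma sum_sq_le_of_l2_le {d : ℕ} {v : Fin d → ℂ} {c : ℝ} (h : l2 d v ≤ c) :
    ∑ k, ‖v k‖ ^ 2 ≤ d * c ^ 2 := by
  rcases Nat.eq_zero_or_pos d with hd | hd
  · subst hd; simp
  have h0 : 0 ≤ (∑ k, ‖v k‖ ^ 2) / d := by positivity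
  have h2 : (∑ k, ‖v k‖ ^ 2) / d ≤ c ^ 2 := by
    calc (∑ k, ‖v k‖ ^ 2) / d = (l2 d v) ^ 2 := (Real.sq_sqrt h0).symm
      _ ≤ c ^ 2 := pow_le_pow_left₀ (l2_nonneg d v) h 2
  calc ∑ k, ‖v k‖ ^ 2 = ((∑ k, ‖v k‖ ^ 2) / d) * d := by field_simp
    _ ≤ c ^ 2 * d := mul_le_mul_of_nonneg_right h2 (by positivity)
    _ = d * c ^ 2 := by ring

lemma card_filter_gt_le {d : ℕ} {v : Fin d → ℂ} {c τ : ℝ} (hτ : 0 < τ)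
    (h : l2 d v ≤ c) :
    ((Finset.univ.filter (fun k => τ < ‖v k‖)).card : ℝ) ≤ d * c ^ 2 / τ ^ 2 := by
  classical
  set A := Finset.univ.filter (fun k : Fin d => τ < ‖v k‖) with hA
  have h1 : (A.card : ℝ) * τ ^ 2 ≤ ∑ k, ‖v k‖ ^ 2 := by
    calc (A.card : ℝ) * τ ^ 2 = ∑ _k ∈ A, τ ^ 2 := by simp [mul_comm]
      _ ≤ ∑ k ∈ A, ‖v k‖ ^ 2 := by
          apply Finset.sum_le_sum
          intro k hk
          have : τ < ‖v k‖ := by simpa [hA] using hk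
          exact pow_le_pow_left₀ hτ.le this.le 2
      _ ≤ ∑ k, ‖v k‖ ^ 2 := Finset.sum_le_sum_of_subset_of_nonneg (Finset.subset_univ A)
          (fun k _ _ => by positivity)
  have h2 := le_trans h1 (sum_sq_le_of_l2_le h)
  rw [le_div_iff₀ (by positivity)]
  exact h2

/-! #### `sepNum` and `elog` lemmas -/

lemma card_le_sepNum {Y : Type*} {S : Set Y} {ρ : Y → Y → ℝ} {ε : ℝ} {t : Finset Y}
    (h1 : ↑t ⊆ S) (h2 : ∀ x ∈ t, ∀ y ∈ t, x ≠ y → ε < ρ x y) :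
    (t.card : ℕ∞) ≤ sepNum S ρ ε :=
  le_iSup₂ (f := fun (t : Finset Y) (_ : t ∈ {t : Finset Y | ↑t ⊆ S ∧
    ∀ x ∈ t, ∀ y ∈ t, x ≠ y → ε < ρ x y}) => (t.card : ℕ∞)) t ⟨h1, h2⟩

lemma sepNum_le_iff {Y : Type*} {S : Set Y} {ρ : Y → Y → ℝ} {ε : ℝ} {N : ℕ∞} :
    sepNum S ρ ε ≤ N ↔ ∀ t : Finset Y, ↑t ⊆ S →
      (∀ x ∈ t, ∀ y ∈ t, x ≠ y → ε < ρ x y) → (t.card : ℕ∞) ≤ N := by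
  constructor
  · intro h t h1 h2
    exact le_trans (card_le_sepNum h1 h2) h
  · intro h
    exact iSup₂_le fun t ht => h t ht.1 ht.2

lemma sepNum_mono_rho {Y : Type*} {S : Set Y} {ρ ρ' : Y → Y → ℝ} {ε : ℝ}
    (h : ∀ x ∈ S, ∀ y ∈ S, ρ x y ≤ ρ' x y) : sepNum S ρ ε ≤ sepNum S ρ' ε := by
  rw [sepNum_le_iff]
  intro t h1 h2
  exact card_le_sepNum h1 fun x hx y hy hxy =>
    lt_of_lt_of_le (h2 x hx y hy hxy) (h x (h1 hx) y (h1 hy))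

lemma sepNum_exists {Y : Type*} {S : Set Y} {ρ : Y → Y → ℝ} {ε : ℝ}
    (h : sepNum S ρ ε ≠ ⊤) : ∃ t : Finset Y, ↑t ⊆ S ∧
      (∀ x ∈ t, ∀ y ∈ t, x ≠ y → ε < ρ x y) ∧ (t.card : ℕ∞) = sepNum S ρ ε := by
  classical
  lift sepNum S ρ ε to ℕ using h with N hN
  by_contra hcon
  push_neg at hcon
  have hlt : sepNum S ρ ε ≤ (N - 1 : ℕ) := by
    rw [sepNum_le_iff]
    intro t h1 h2
    have hle : (t.card : ℕ∞) ≤ (N : ℕ∞) := hN ▸ card_le_sepNum h1 h2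
    have hne : t.card ≠ N := by
      intro hEq
      exact hcon t h1 h2 (by rw [hEq, hN])
    have : t.card ≤ N := by exact_mod_cast hle
    have : t.card ≤ N - 1 := by omega
    exact_mod_cast this
  rw [← hN] at hlt
  have hNpos : 0 < N := by
    by_contra h0
    push_neg at h0
    interval_cases N
    exact hcon ∅ (by simp) (by simp) (by simp [← hN])
  have : (N : ℕ∞) ≤ (N - 1 : ℕ) := hlt
  have : N ≤ N - 1 := by exact_mod_cast this
  omega

lemma exists_cover {Y : Type*} {S : Set Y} {ρ : Y → Y → ℝ} {ε : ℝ}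
    (hρs : ∀ x ∈ S, ∀ y ∈ S, ρ x y = ρ y x) (hρ0 : ∀ x ∈ S, ρ x x ≤ ε)
    (h : sepNum S ρ ε ≠ ⊤) : ∃ t : Finset Y, ↑t ⊆ S ∧
      ((t.card : ℕ∞) = sepNum S ρ ε) ∧ ∀ y ∈ S, ∃ x ∈ t, ρ y x ≤ ε := by
  classical
  obtain ⟨t, h1, h2, h3⟩ := sepNum_exists h
  refine ⟨t, h1, h3, ?_⟩
  intro y hy
  by_contra hcon
  push_neg at hcon
  have hynot : y ∉ t := by
    intro hyt
    exact absurd (hρ0 y hy) (not_le.2 (hcon y hyt))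
  have hsep : ∀ x ∈ insert y t, ∀ z ∈ insert y t, x ≠ z → ε < ρ x z := by
    intro x hx z hz hxz
    rcases Finset.mem_insert.1 hx with hx1 | hx2
    · rcases Finset.mem_insert.1 hz with hz1 | hz2
      · exact absurd (hx1.trans hz1.symm) hxz
      · rw [hx1]
        exact hcon z hz2
    · rcases Finset.mem_insert.1 hz with hz1 | hz2
      · rw [hz1, hρs x (h1 (Finset.mem_coe.2 hx2)) y hy]
        exact hcon x hx2
      · exact h2 x hx2 z hz2 hxz
  have hsub : ↑(insert y t) ⊆ S := by
    intro z hz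
    have h' : z ∈ insert y t := Finset.mem_coe.1 hz
    rcases Finset.mem_insert.1 h' with rfl | h''
    · exact hy
    · exact h1 h''
  have := card_le_sepNum hsub hsep
  rw [Finset.card_insert_of_notMem hynot, ← h3] at this
  have h4 : t.card + 1 ≤ t.card := by exact_mod_cast this
  omega

lemma toNat_pos' {a : ℕ∞} (h0 : a ≠ 0) (ht : a ≠ ⊤) : 0 < a.toNat := by
  rcases Nat.eq_zero_or_pos a.toNat with h | h
  · rw [ENat.toNat_eq_zero] at h
    tauto
  · exact h

lemma elog_mono : Monotone elog := by
  intro a b hab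
  unfold elog
  rcases eq_or_ne b ⊤ with rfl | hb
  · simp
  rw [if_neg hb]
  have ha : a ≠ ⊤ := fun h => hb (top_le_iff.1 (h ▸ hab))
  rw [if_neg ha]
  rcases eq_or_ne a 0 with rfl | ha0
  · rw [if_pos rfl]
    exact bot_le
  rw [if_neg ha0]
  have hb0 : b ≠ 0 := fun h => ha0 (le_antisymm (h ▸ hab) zero_le)
  rw [if_neg hb0]
  have htn : a.toNat ≤ b.toNat := ENat.toNat_le_toNat hab hb
  have h1' : 0 < a.toNat := toNat_pos' ha0 ha
  exact_mod_cast Real.log_le_log (by exact_mod_cast h1') (by exact_mod_cast htn)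

lemma elog_mul_le {b : ℕ∞} {K : ℕ} (hK : 1 ≤ K) {a : ℕ∞} (hab : a ≤ b * K) :
    elog a ≤ elog b + (Real.log K : EReal) := by
  rcases eq_or_ne b ⊤ with rfl | hb
  · have : elog ⊤ = ⊤ := by simp [elog]
    rw [this]
    rw [EReal.top_add_coe]
    exact le_top
  rcases eq_or_ne a 0 with rfl | ha0
  · have : elog 0 = ⊥ := by simp [elog]
    rw [this]; exact bot_le
  rcases eq_or_ne b 0 with rfl | hb0
  · simp at hab
    exact absurd hab ha0
  have hbK : b * (K : ℕ∞) ≠ ⊤ := WithTop.mul_ne_top hb (WithTop.coe_ne_top)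
  have haT : a ≠ ⊤ := fun h => hbK (top_le_iff.1 (h ▸ hab))
  have haN : 0 < a.toNat := toNat_pos' ha0 haT
  have hbN : 0 < b.toNat := toNat_pos' hb0 hb
  have hmul : a.toNat ≤ b.toNat * K := by
    have := ENat.toNat_le_toNat hab hbK
    have hmm : (b * (K:ℕ∞)).toNat = b.toNat * ((K:ℕ∞)).toNat := ENat.toNat_mul b K
    rw [hmm, ENat.toNat_coe] at this
    exact this
  have hlog : Real.log a.toNat ≤ Real.log b.toNat + Real.log K := by
    rw [← Real.log_mul (by exact_mod_cast hbN.ne')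
      (by exact_mod_cast hK.trans_lt' zero_lt_one |>.ne')]
    apply Real.log_le_log (by exact_mod_cast haN)
    exact_mod_cast hmul
  unfold elog
  rw [if_neg haT, if_neg ha0, if_neg hb, if_neg hb0]
  exact_mod_cast hlog

/-! #### `EReal` lemmas -/

/-- Adding a real constant is an order isomorphism of `EReal`. -/
def addRealIso (c : ℝ) : EReal ≃o EReal where
  toFun x := x + (c : EReal)
  invFun x := x - (c : EReal)
  left_inv x := EReal.add_sub_cancel_right
  right_inv x := EReal.sub_add_cancel
  map_rel_iff' := by
    intro a b
    exact (EReal.addLECancellable_coe c).add_le_add_iff_right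

lemma addRealIso_apply (c : ℝ) (x : EReal) : addRealIso c x = x + c := rfl

lemma limsup_add_real {α : Type*} {f : Filter α} (v : α → EReal) (c : ℝ) :
    limsup (fun i => v i + (c : EReal)) f = limsup v f + (c : EReal) := by
  have := OrderIso.limsup_apply (g := addRealIso c) (u := v) (f := f)
  simpa [addRealIso_apply] using this.symm

lemma iInf_add_real {ι : Sort*} (g : ι → EReal) (c : ℝ) :
    ⨅ i, (g i + (c : EReal)) = (⨅ i, g i) + (c : EReal) := by
  have := OrderIso.map_iInf (addRealIso c) g
  exact this.symm

lemma mul_le_mul_add {x y : EReal} {r c : ℝ} (hc : 0 < c) (h : x ≤ y + (r : EReal)) :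
    (c : EReal) * x ≤ (c : EReal) * y + ((c * r : ℝ) : EReal) := by
  induction y with
  | bot =>
    rw [EReal.bot_add] at h
    rw [le_bot_iff] at h
    subst h
    rw [EReal.coe_mul_bot_of_pos hc, EReal.bot_add]
  | coe y =>
    rw [← EReal.coe_add] at h
    induction x with
    | bot =>
      rw [EReal.coe_mul_bot_of_pos hc, ← EReal.coe_mul, ← EReal.coe_add]
      exact bot_le
    | coe x =>
      rw [EReal.coe_le_coe_iff] at h
      rw [← EReal.coe_mul, ← EReal.coe_mul, ← EReal.coe_add, EReal.coe_le_coe_iff]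
      nlinarith
    | top =>
      rw [top_le_iff] at h
      exact absurd h (EReal.coe_ne_top _)
  | top =>
    rw [EReal.coe_mul_top_of_pos hc]
    rw [EReal.top_add_coe]
    exact le_top

lemma le_of_forall_le_add {a b : EReal} (h : ∀ η : ℝ, 0 < η → a ≤ b + (η : EReal)) :
    a ≤ b := by
  induction b with
  | bot =>
    have := h 1 one_pos
    rw [EReal.bot_add] at this
    exact this
  | coe b =>
    induction a with
    | bot => exact bot_le
    | coe a =>
      rw [EReal.coe_le_coe_iff]
      apply le_of_forall_pos_le_add
      intro η hη
      have := h η hη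
      rw [← EReal.coe_add, EReal.coe_le_coe_iff] at this
      exact this
    | top =>
      have := h 1 one_pos
      rw [← EReal.coe_add, top_le_iff] at this
      exact absurd this (EReal.coe_ne_top _)
  | top => exact le_top

/-! #### Counting lemmas -/

lemma card_small_support_le (d m : ℕ) (V : Type*) [Fintype V] [DecidableEq V] :
    (Finset.univ.filter (fun r : Fin d → Option V =>
        (Finset.univ.filter (fun k => r k ≠ none)).card ≤ m)).card ≤
      (∑ j ∈ Finset.range (m+1), d.choose j) * (Fintype.card V + 1) ^ m := by
  classical
  set Q := Fintype.card V + 1 with hQ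
  set supp : (Fin d → Option V) → Finset (Fin d) :=
    fun r => Finset.univ.filter (fun k => r k ≠ none) with hsupp
  set Rset := Finset.univ.filter (fun r : Fin d → Option V => (supp r).card ≤ m) with hRset
  set SS := (Finset.range (m+1)).biUnion
    (fun j => Finset.powersetCard j (Finset.univ : Finset (Fin d))) with hSS
  have hmemSS : ∀ s ∈ SS, s.card ≤ m := by
    intro s hs
    rcases Finset.mem_biUnion.1 hs with ⟨j, hj, hjs⟩
    rcases Finset.mem_powersetCard.1 hjs with ⟨_, rfl⟩
    exact Nat.lt_succ_iff.1 (Finset.mem_range.1 hj)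
  have h1 : Rset ⊆ SS.biUnion (fun s => Rset.filter (fun r => supp r = s)) := by
    intro r hr
    have hcard : (supp r).card ≤ m := (Finset.mem_filter.1 hr).2
    apply Finset.mem_biUnion.2
    refine ⟨supp r, ?_, Finset.mem_filter.2 ⟨hr, rfl⟩⟩
    apply Finset.mem_biUnion.2
    exact ⟨(supp r).card, Finset.mem_range.2 (Nat.lt_succ_of_le hcard),
      Finset.mem_powersetCard.2 ⟨Finset.subset_univ _, rfl⟩⟩
  have h2 : ∀ s : Finset (Fin d), (Rset.filter (fun r => supp r = s)).card ≤ Q ^ s.card := by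
    intro s
    have hinj : (Rset.filter (fun r => supp r = s)).card ≤
        (Finset.univ : Finset ((k : ↑s) → Option V)).card := by
      apply Finset.card_le_card_of_injOn (fun r => (fun k : ↑s => r k))
        (fun r _ => Finset.mem_univ _)
      intro r1 hr1 r2 hr2 heq
      have hs1 : supp r1 = s := (Finset.mem_filter.1 hr1).2
      have hs2 : supp r2 = s := (Finset.mem_filter.1 hr2).2
      funext k
      by_cases hk : k ∈ s
      · exact congrFun heq ⟨k, hk⟩
      · have e1 : r1 k = none := by
          by_contra hcon
          exact hk (hs1 ▸ Finset.mem_filter.2 ⟨Finset.mem_univ _, hcon⟩)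
        have e2 : r2 k = none := by
          by_contra hcon
          exact hk (hs2 ▸ Finset.mem_filter.2 ⟨Finset.mem_univ _, hcon⟩)
        rw [e1, e2]
    calc (Rset.filter (fun r => supp r = s)).card
        ≤ (Finset.univ : Finset ((k : ↑s) → Option V)).card := hinj
      _ = Q ^ s.card := by
          rw [Finset.card_univ, Fintype.card_fun]
          simp [hQ, Fintype.card_option]
  have h3 : SS.card ≤ ∑ j ∈ Finset.range (m+1), d.choose j := by
    calc SS.card ≤ ∑ j ∈ Finset.range (m+1),
          (Finset.powersetCard j (Finset.univ : Finset (Fin d))).card :=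
        Finset.card_biUnion_le
      _ = ∑ j ∈ Finset.range (m+1), d.choose j := by
          apply Finset.sum_congr rfl
          intro j _
          rw [Finset.card_powersetCard, Finset.card_univ, Fintype.card_fin]
  calc Rset.card ≤ (SS.biUnion (fun s => Rset.filter (fun r => supp r = s))).card :=
        Finset.card_le_card h1
    _ ≤ ∑ s ∈ SS, (Rset.filter (fun r => supp r = s)).card := Finset.card_biUnion_le
    _ ≤ ∑ s ∈ SS, Q ^ m := by
        apply Finset.sum_le_sum
        intro s hs
        exact le_trans (h2 s) (Nat.pow_le_pow_right (Nat.succ_le_succ (Nat.zero_le _))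
          (hmemSS s hs))
    _ = SS.card * Q ^ m := by rw [Finset.sum_const, smul_eq_mul]
    _ ≤ (∑ j ∈ Finset.range (m+1), d.choose j) * Q ^ m :=
        Nat.mul_le_mul_right _ h3

lemma sum_choose_le (d m : ℕ) (κ : ℝ) (h0 : 0 < κ) (h1 : κ ≤ 1) (hmd : m ≤ d) :
    ((∑ j ∈ Finset.range (m+1), d.choose j : ℕ) : ℝ) ≤ (1+κ) ^ d / κ ^ m := by
  rw [le_div_iff₀ (by positivity)]
  have step : (↑(∑ j ∈ Finset.range (m+1), d.choose j) : ℝ) * κ ^ m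
      ≤ ∑ j ∈ Finset.range (m+1), (d.choose j : ℝ) * κ ^ j := by
    push_cast
    rw [Finset.sum_mul]
    apply Finset.sum_le_sum
    intro j hj
    have : κ ^ m ≤ κ ^ j :=
      pow_le_pow_of_le_one h0.le h1 (Nat.lt_succ_iff.1 (Finset.mem_range.1 hj))
    exact mul_le_mul_of_nonneg_left this (by positivity)
  apply le_trans step
  have step2 : ∑ j ∈ Finset.range (m+1), (d.choose j : ℝ) * κ ^ j
      ≤ ∑ j ∈ Finset.range (d+1), (d.choose j : ℝ) * κ ^ j := by
    apply Finset.sum_le_sum_of_subset_of_nonneg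
    · exact Finset.range_subset_range.2 (Nat.succ_le_succ hmd)
    · intro j _ _
      positivity
  apply le_trans step2
  have hbin := add_pow κ (1:ℝ) d
  simp only [one_pow, mul_one] at hbin
  rw [add_comm (1:ℝ) κ, hbin]
  apply le_of_eq
  apply Finset.sum_congr rfl
  intro j _
  ring

lemma one_le_R (d m q : ℕ) :
    1 ≤ (∑ j ∈ Finset.range (m+1), d.choose j) * (q + 1) ^ m := by
  have h1 : 1 ≤ ∑ j ∈ Finset.range (m+1), d.choose j := by
    have : d.choose 0 ≤ ∑ j ∈ Finset.range (m+1), d.choose j :=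
      Finset.single_le_sum (f := fun j => d.choose j) (fun j _ => Nat.zero_le _)
        (Finset.mem_range.2 (Nat.succ_pos m))
    simpa using this
  have h2 : 1 ≤ (q + 1) ^ m := Nat.one_le_pow _ _ (Nat.succ_pos _)
  calc 1 = 1 * 1 := rfl
    _ ≤ _ := Nat.mul_le_mul h1 h2

lemma logR_le {d : ℕ} (hd : 0 < d) {κ : ℝ} (hκ0 : 0 < κ) (hκ1 : κ ≤ 1) (q : ℕ) :
    Real.log (((∑ j ∈ Finset.range (⌊κ * d⌋₊ + 1), d.choose j) * (q + 1) ^ ⌊κ * d⌋₊ : ℕ) : ℝ)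
      ≤ d * (κ * (Real.log (1/κ) + Real.log ((q : ℝ) + 1)) + Real.log (1+κ)) := by
  set m := ⌊κ * d⌋₊ with hm
  have hmκ : (m : ℝ) ≤ κ * d := Nat.floor_le (by positivity)
  have hmd : m ≤ d := by
    have : (m : ℝ) ≤ (d : ℝ) := le_trans hmκ (by nlinarith [Nat.cast_nonneg (α := ℝ) d])
    exact_mod_cast this
  have hq1 : (1 : ℝ) ≤ (q : ℝ) + 1 := by
    have : (0:ℝ) ≤ (q:ℝ) := Nat.cast_nonneg q
    linarith
  have hlogq : 0 ≤ Real.log ((q : ℝ) + 1) := Real.log_nonneg hq1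
  have hlogκ : 0 ≤ Real.log (1/κ) := Real.log_nonneg (by
    rw [le_div_iff₀ hκ0]; linarith)
  -- bound R ≤ A
  have hA : (((∑ j ∈ Finset.range (m + 1), d.choose j) * (q + 1) ^ m : ℕ) : ℝ)
      ≤ ((1+κ) ^ d / κ ^ m) * ((q : ℝ) + 1) ^ m := by
    push_cast [← Nat.cast_sum]
    apply mul_le_mul_of_nonneg_right (sum_choose_le d m κ hκ0 hκ1 hmd) (by positivity)
  have hRpos : (0 : ℝ) < (((∑ j ∈ Finset.range (m + 1), d.choose j) * (q + 1) ^ m : ℕ) : ℝ) := by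
    exact_mod_cast Nat.lt_of_lt_of_le Nat.zero_lt_one (one_le_R d m q)
  have hlog1 : Real.log (((∑ j ∈ Finset.range (m + 1), d.choose j) * (q + 1) ^ m : ℕ) : ℝ)
      ≤ Real.log (((1+κ) ^ d / κ ^ m) * ((q : ℝ) + 1) ^ m) :=
    Real.log_le_log hRpos hA
  apply le_trans hlog1
  have hne1 : ((1+κ) ^ d / κ ^ m : ℝ) ≠ 0 := by positivity
  have hne2 : (((q:ℝ) + 1) ^ m : ℝ) ≠ 0 := by positivity
  rw [Real.log_mul hne1 hne2, Real.log_div (by positivity) (by positivity),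
    Real.log_pow, Real.log_pow, Real.log_pow]
  have hlogκ' : Real.log (1/κ) = - Real.log κ := by
    rw [one_div, Real.log_inv]
  have h1 : (m : ℝ) * Real.log ((q:ℝ)+1) ≤ κ * d * Real.log ((q:ℝ)+1) :=
    mul_le_mul_of_nonneg_right hmκ hlogq
  have h2 : -((m : ℝ) * Real.log κ) ≤ κ * d * Real.log (1/κ) := by
    rw [hlogκ']
    have := mul_le_mul_of_nonneg_right hmκ hlogκ
    rw [hlogκ'] at this
    nlinarith
  have h3 : (d : ℝ) * Real.log (1+κ) = d * Real.log (1+κ) := rfl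
  nlinarith [mul_le_mul_of_nonneg_right hmκ hlogκ]

lemma exists_kappa (η C : ℝ) (hη : 0 < η) (hC : 0 ≤ C) :
    ∃ κ : ℝ, 0 < κ ∧ κ ≤ 1 ∧ κ * (Real.log (1/κ) + C) + Real.log (1+κ) ≤ η := by
  refine ⟨min 1 (min (η/(3*(C+1))) (η^2/36)), ?_, min_le_left _ _, ?_⟩
  · have : 0 < min (η/(3*(C+1))) (η^2/36) := lt_min (by positivity) (by positivity)
    exact lt_min one_pos this
  set κ := min 1 (min (η/(3*(C+1))) (η^2/36)) with hκ
  have hκ0 : 0 < κ := lt_min one_pos (lt_min (by positivity) (by positivity))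
  have hκ1 : κ ≤ 1 := min_le_left _ _
  have hκa : κ ≤ η/(3*(C+1)) := le_trans (min_le_right _ _) (min_le_left _ _)
  have hκb : κ ≤ η^2/36 := le_trans (min_le_right _ _) (min_le_right _ _)
  have hsq : Real.sqrt κ ≤ η/6 := by
    calc Real.sqrt κ ≤ Real.sqrt (η^2/36) := Real.sqrt_le_sqrt hκb
      _ = Real.sqrt ((η/6)^2) := by ring_nf
      _ = η/6 := Real.sqrt_sq (by positivity)
  have hsqpos : 0 < Real.sqrt κ := Real.sqrt_pos.2 hκ0
  have hlog1 : Real.log (1/κ) ≤ 2 / Real.sqrt κ := by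
    have hrw : (1:ℝ)/κ = (1/Real.sqrt κ)^2 := by
      rw [div_pow, one_pow, Real.sq_sqrt hκ0.le]
    rw [hrw, Real.log_pow]
    push_cast
    have := Real.log_le_sub_one_of_pos (x := 1/Real.sqrt κ) (by positivity)
    have h2 : Real.log (1/Real.sqrt κ) ≤ 1/Real.sqrt κ := by linarith
    calc 2 * Real.log (1/Real.sqrt κ) ≤ 2 * (1/Real.sqrt κ) := by linarith
      _ = 2 / Real.sqrt κ := by ring
  have hterm1 : κ * Real.log (1/κ) ≤ η/3 := by
    have h1 : κ * Real.log (1/κ) ≤ κ * (2/Real.sqrt κ) := by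
      apply mul_le_mul_of_nonneg_left hlog1 hκ0.le
    have h2 : κ * (2/Real.sqrt κ) = 2 * Real.sqrt κ := by
      rw [eq_comm]
      field_simp
      nlinarith [Real.sq_sqrt hκ0.le]
    rw [h2] at h1
    calc κ * Real.log (1/κ) ≤ 2 * Real.sqrt κ := h1
      _ ≤ 2 * (η/6) := by linarith
      _ ≤ η/3 := by linarith
  have hterm2 : κ * C ≤ η/3 := by
    have h1 : κ * C ≤ (η/(3*(C+1))) * C := mul_le_mul_of_nonneg_right hκa hC
    have h2 : (η/(3*(C+1))) * C ≤ η/3 := by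
      rw [div_mul_eq_mul_div, div_le_div_iff₀ (by positivity) (by positivity)]
      nlinarith
    linarith
  have hterm3 : Real.log (1+κ) ≤ η/3 := by
    have h1 : Real.log (1+κ) ≤ (1+κ) - 1 := Real.log_le_sub_one_of_pos (by positivity)
    have h2 : κ ≤ η/3 := by
      calc κ ≤ η/(3*(C+1)) := hκa
        _ ≤ η/3 := by
          apply div_le_div_of_nonneg_left hη.le (by positivity)
          nlinarith
    linarith
  have expand : κ * (Real.log (1/κ) + C) = κ * Real.log (1/κ) + κ * C := by ring
  linarith [expand]


/-- rounding lemma -/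
lemma rnd_close {ε : ℝ} (hε : 0 < ε) {r1 r2 : ℝ} (h10 : 0 ≤ r1) (h11 : r1 ≤ 1)
    (h20 : 0 ≤ r2) (h21 : r2 ≤ 1)
    (h : min (⌊4/ε⌋₊) ⌊r1 * (4/ε)⌋₊ = min (⌊4/ε⌋₊) ⌊r2 * (4/ε)⌋₊) : |r1 - r2| ≤ ε/4 := by
  have hc : 0 < 4/ε := by positivity
  have e1 : ⌊r1 * (4/ε)⌋₊ ≤ ⌊4/ε⌋₊ := Nat.floor_le_floor (by nlinarith)
  have e2 : ⌊r2 * (4/ε)⌋₊ ≤ ⌊4/ε⌋₊ := Nat.floor_le_floor (by nlinarith)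
  rw [min_eq_right e1, min_eq_right e2] at h
  have a1 : (⌊r1 * (4/ε)⌋₊ : ℝ) ≤ r1 * (4/ε) := Nat.floor_le (by positivity)
  have b1 : r1 * (4/ε) < ⌊r1 * (4/ε)⌋₊ + 1 := Nat.lt_floor_add_one _
  have a2 : (⌊r2 * (4/ε)⌋₊ : ℝ) ≤ r2 * (4/ε) := Nat.floor_le (by positivity)
  have b2 : r2 * (4/ε) < ⌊r2 * (4/ε)⌋₊ + 1 := Nat.lt_floor_add_one _
  rw [h] at a1 b1
  have habs : |r1 * (4/ε) - r2 * (4/ε)| < 1 := abs_sub_lt_iff.2 ⟨by linarith, by linarith⟩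
  have h4 : |r1 - r2| * (4/ε) < 1 := by
    calc |r1 - r2| * (4/ε) = |r1 - r2| * |4/ε| := by rw [abs_of_pos hc]
      _ = |(r1 - r2) * (4/ε)| := (abs_mul _ _).symm
      _ = |r1 * (4/ε) - r2 * (4/ε)| := by ring_nf
      _ < 1 := habs
  have h5 : |r1 - r2| < 1 / (4/ε) := by
    rw [lt_div_iff₀ hc]
    exact h4
  have heq : (1 : ℝ) / (4/ε) = ε/4 := by
    field_simp
  rw [heq] at h5
  exact h5.le

end Aux


section Key

open Finset

variable {X : Type*} [TopologicalSpace X] {n : ℕ} {P : Fin n → C(X, ℂ)}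

lemma rhoPartCinf_nonneg {d : ℕ} (φ ψ : C(X, ℂ) →ₐ[ℂ] (Fin d → ℂ)) :
    0 ≤ rhoPartCinf P φ ψ :=
  Real.iSup_nonneg fun _ => linf_nonneg _ _

lemma l2_le_rhoPartC {d : ℕ} (φ ψ : C(X, ℂ) →ₐ[ℂ] (Fin d → ℂ)) (i : Fin n) :
    l2 d (φ (P i) - ψ (P i)) ≤ rhoPartC P φ ψ :=
  le_ciSup (f := fun i => l2 d (φ (P i) - ψ (P i)))
    (Set.Finite.bddAbove (Set.finite_range _)) i

lemma rhoPartC_symm {d : ℕ} (φ ψ : C(X, ℂ) →ₐ[ℂ] (Fin d → ℂ)) :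
    rhoPartC P φ ψ = rhoPartC P ψ φ := by
  unfold rhoPartC
  congr 1
  funext i
  exact l2_sub_comm d _ _

lemma rhoPartC_self_le {d : ℕ} (φ : C(X, ℂ) →ₐ[ℂ] (Fin d → ℂ)) {c : ℝ} (hc : 0 ≤ c) :
    rhoPartC P φ φ ≤ c := by
  apply Real.iSup_le _ hc
  intro i
  have : (φ (P i) - φ (P i)) = 0 := sub_self _
  rw [this]
  have : l2 d 0 = 0 := by simp [l2]
  rw [this]
  exact hc

lemma rhoPartC_le_inf {d : ℕ} (φ ψ : C(X, ℂ) →ₐ[ℂ] (Fin d → ℂ)) :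
    rhoPartC P φ ψ ≤ rhoPartCinf P φ ψ := by
  apply Real.iSup_le _ (rhoPartCinf_nonneg φ ψ)
  intro i
  exact (l2_le_linf d _).trans (le_ciSup (f := fun i => linf d (φ (P i) - ψ (P i)))
    (Set.Finite.bddAbove (Set.finite_range _)) i)

lemma hom_val (hPpos : ∀ i x, 0 ≤ P i x) (hPsum : ∑ i, P i = 1)
    {d : ℕ} (φ : C(X, ℂ) →ₐ[ℂ] (Fin d → ℂ)) (i : Fin n) (k : Fin d) :
    ∃ r : ℝ, 0 ≤ r ∧ r ≤ 1 ∧ φ (P i) k = (r : ℂ) := by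
  classical
  let χ : C(X, ℂ) →ₐ[ℂ] ℂ := (Pi.evalAlgHom ℂ (fun _ : Fin d => ℂ) k).comp φ
  have h1 : χ (P i) ∈ spectrum ℂ (P i) := AlgHom.apply_mem_spectrum χ (P i)
  rw [ContinuousMap.spectrum_eq_range] at h1
  obtain ⟨x, hx⟩ := h1
  have h0 : (0 : ℂ) ≤ P i x := hPpos i x
  have hsum : ∑ j, P j x = 1 := by
    have := congrFun (congrArg (fun f : C(X, ℂ) => (f : X → ℂ)) hPsum) x
    simpa using this
  have hle : P i x ≤ 1 := by
    rw [← hsum]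
    exact Finset.single_le_sum (fun j _ => hPpos j x) (Finset.mem_univ i)
  have him : (P i x).im = 0 := ((Complex.le_def).1 h0).2.symm
  have hre0 : 0 ≤ (P i x).re := by simpa using ((Complex.le_def).1 h0).1
  have hre1 : (P i x).re ≤ 1 := by simpa using ((Complex.le_def).1 hle).1
  refine ⟨(P i x).re, hre0, hre1, ?_⟩
  have : φ (P i) k = P i x := hx ▸ rfl
  rw [this]
  apply Complex.ext
  · simp
  · simp [him]

/-- Key counting estimate: `ε`-separated sets for the sup metric are controlled by
`ε'`-separated sets for the `ℓ²` metric, up to a combinatorial factor. -/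
lemma key_count (hPpos : ∀ i x, 0 ≤ P i x) (hPsum : ∑ i, P i = 1)
    {d : ℕ} {ε ε' κ : ℝ} (hε : 0 < ε) (hε' : 0 < ε')
    (hκ0 : 0 < κ) (hκ : (n : ℝ) * (16 * ε' ^ 2 / ε ^ 2) ≤ κ)
    (S : Set (C(X, ℂ) →ₐ[ℂ] (Fin d → ℂ))) :
    sepNum S (rhoPartCinf P) ε ≤ sepNum S (rhoPartC P) ε' *
      (((∑ j ∈ Finset.range (⌊κ * d⌋₊ + 1), d.choose j) *
        ((⌊4/ε⌋₊ + 1) ^ n + 1) ^ ⌊κ * d⌋₊ : ℕ) : ℕ∞) := by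
  classical
  set m := ⌊κ * d⌋₊ with hm
  set L := ⌊4/ε⌋₊ + 1 with hL
  set R : ℕ := (∑ j ∈ Finset.range (m+1), d.choose j) * (L ^ n + 1) ^ m with hR
  have hR1 : 1 ≤ R := by
    have h1 : 1 ≤ ∑ j ∈ Finset.range (m+1), d.choose j := by
      have : d.choose 0 ≤ ∑ j ∈ Finset.range (m+1), d.choose j :=
        Finset.single_le_sum (f := fun j => d.choose j) (fun j _ => Nat.zero_le _)
          (Finset.mem_range.2 (Nat.succ_pos m))
      simpa using this
    have h2 : 1 ≤ (L ^ n + 1) ^ m := Nat.one_le_pow _ _ (Nat.succ_pos _)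
    calc 1 = 1 * 1 := rfl
      _ ≤ _ := Nat.mul_le_mul h1 h2
  rcases eq_or_ne (sepNum S (rhoPartC P) ε') ⊤ with htop | hne
  · rw [htop]
    have hRne : (R : ℕ∞) ≠ 0 := by exact_mod_cast Nat.one_le_iff_ne_zero.1 hR1
    rw [ENat.top_mul hRne]
    exact le_top
  obtain ⟨t, htS, htcard, hcover⟩ := exists_cover
    (fun x _ y _ => rhoPartC_symm x y) (fun x _ => rhoPartC_self_le x hε'.le) hne
  rw [sepNum_le_iff]
  intro E hES hEsep
  set V := Fin n → Fin L with hV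
  set Rset := Finset.univ.filter
    (fun r : Fin d → Option V => (Finset.univ.filter (fun k => r k ≠ none)).card ≤ m)
    with hRset
  have hRsetcard : Rset.card ≤ R := by
    have := card_small_support_le d m V
    have hcV : Fintype.card V = L ^ n := by
      show Fintype.card (Fin n → Fin L) = L ^ n
      simp [Fintype.card_fun]
    rw [hcV] at this
    exact this
  have hLpos : 0 < L := Nat.succ_pos _
  set rnd : ℂ → Fin L := fun z =>
    ⟨min (L-1) ⌊z.re * (4/ε)⌋₊, lt_of_le_of_lt (min_le_left _ _) (by omega)⟩ with hrnd
  set dat : (C(X, ℂ) →ₐ[ℂ] (Fin d → ℂ)) → (C(X, ℂ) →ₐ[ℂ] (Fin d → ℂ)) →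
      Fin d → Option V := fun φ ψ k =>
    if ∃ i, ε/4 < ‖φ (P i) k - ψ (P i) k‖ then some (fun i => rnd (φ (P i) k)) else none
    with hdat
  set f : (C(X, ℂ) →ₐ[ℂ] (Fin d → ℂ)) →
      (C(X, ℂ) →ₐ[ℂ] (Fin d → ℂ)) × (Fin d → Option V) := fun φ =>
    if h : ∃ ψ, ψ ∈ t ∧ rhoPartC P φ ψ ≤ ε' then (h.choose, dat φ h.choose)
    else (φ, fun _ => none) with hf
  -- support bound for `dat`
  have hsupp : ∀ φ ∈ S, ∀ ψ, rhoPartC P φ ψ ≤ ε' →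
      (Finset.univ.filter (fun k => dat φ ψ k ≠ none)).card ≤ m := by
    intro φ hφ ψ hρ
    set D := Finset.univ.biUnion (fun i : Fin n =>
      Finset.univ.filter (fun k : Fin d => ε/4 < ‖(φ (P i) - ψ (P i)) k‖)) with hD
    have hsub : Finset.univ.filter (fun k => dat φ ψ k ≠ none) ⊆ D := by
      intro k hk
      have hk' : dat φ ψ k ≠ none := (Finset.mem_filter.1 hk).2
      rw [hdat] at hk'
      by_cases hcond : ∃ i, ε/4 < ‖φ (P i) k - ψ (P i) k‖
      · obtain ⟨i, hi⟩ := hcond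
        apply Finset.mem_biUnion.2
        exact ⟨i, Finset.mem_univ _, Finset.mem_filter.2 ⟨Finset.mem_univ _, by
          simpa [Pi.sub_apply] using hi⟩⟩
      · simp only [hcond, if_neg, not_false_iff] at hk'
        exact absurd rfl hk'
    have hDcard : (D.card : ℝ) ≤ κ * d := by
      have hcards : ∀ i : Fin n,
          ((Finset.univ.filter (fun k : Fin d => ε/4 < ‖(φ (P i) - ψ (P i)) k‖)).card : ℝ)
            ≤ d * ε' ^ 2 / (ε/4) ^ 2 := by
        intro i
        exact card_filter_gt_le (by positivity) ((l2_le_rhoPartC φ ψ i).trans hρ)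
      calc (D.card : ℝ)
          ≤ ∑ i : Fin n, ((Finset.univ.filter
              (fun k : Fin d => ε/4 < ‖(φ (P i) - ψ (P i)) k‖)).card : ℝ) := by
            exact_mod_cast Nat.cast_le.2 Finset.card_biUnion_le
        _ ≤ ∑ _i : Fin n, (d * ε' ^ 2 / (ε/4) ^ 2) := Finset.sum_le_sum fun i _ => hcards i
        _ = n * (d * ε' ^ 2 / (ε/4) ^ 2) := by simp [mul_comm]
        _ = d * ((n : ℝ) * (16 * ε' ^ 2 / ε ^ 2)) := by
            field_simp
            ring
        _ ≤ d * κ := mul_le_mul_of_nonneg_left hκ (Nat.cast_nonneg d)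
        _ = κ * d := mul_comm _ _
    calc (Finset.univ.filter (fun k => dat φ ψ k ≠ none)).card
        ≤ D.card := Finset.card_le_card hsub
      _ ≤ m := Nat.le_floor (by exact_mod_cast hDcard)
  -- `f` maps `E` into `t ×ˢ Rset`
  have hmaps : ∀ φ ∈ E, f φ ∈ t ×ˢ Rset := by
    intro φ hφ
    have hcov := hcover φ (hES hφ)
    have hcov' : ∃ ψ, ψ ∈ t ∧ rhoPartC P φ ψ ≤ ε' := by
      obtain ⟨ψ, h1, h2⟩ := hcov
      exact ⟨ψ, h1, h2⟩
    rw [hf]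
    simp only [dif_pos hcov']
    apply Finset.mem_product.2
    constructor
    · exact hcov'.choose_spec.1
    · rw [hRset]
      apply Finset.mem_filter.2
      exact ⟨Finset.mem_univ _, hsupp φ (hES hφ) _ hcov'.choose_spec.2⟩
  -- `f` is injective on `E`
  have hinj : Set.InjOn f ↑E := by
    intro φ1 h1 φ2 h2 hfeq
    by_contra hne12
    have hsep := hEsep φ1 (Finset.mem_coe.1 h1) φ2 (Finset.mem_coe.1 h2) hne12
    have hcov1 : ∃ ψ, ψ ∈ t ∧ rhoPartC P φ1 ψ ≤ ε' := by
      obtain ⟨ψ, ha, hb⟩ := hcover φ1 (hES (Finset.mem_coe.1 h1))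
      exact ⟨ψ, ha, hb⟩
    have hcov2 : ∃ ψ, ψ ∈ t ∧ rhoPartC P φ2 ψ ≤ ε' := by
      obtain ⟨ψ, ha, hb⟩ := hcover φ2 (hES (Finset.mem_coe.1 h2))
      exact ⟨ψ, ha, hb⟩
    rw [hf] at hfeq
    simp only [dif_pos hcov1, dif_pos hcov2, Prod.mk.injEq] at hfeq
    obtain ⟨hψeq, hdateq⟩ := hfeq
    set ψ := hcov1.choose with hψ
    have hρ1 : rhoPartC P φ1 ψ ≤ ε' := hcov1.choose_spec.2
    have hρ2 : rhoPartC P φ2 ψ ≤ ε' := by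
      have := hcov2.choose_spec.2
      rw [← hψeq] at this
      exact this
    have hdat2 : dat φ1 ψ = dat φ2 ψ := by
      rw [hψeq] at hdateq ⊢
      exact hdateq
    -- show sup-distance ≤ ε, contradiction
    have hbound : rhoPartCinf P φ1 φ2 ≤ ε := by
      apply Real.iSup_le _ hε.le
      intro i
      apply Real.iSup_le _ hε.le
      intro k
      rw [Pi.sub_apply]
      have hdk := congrFun hdat2 k
      rw [hdat] at hdk
      by_cases c1 : ∃ i', ε/4 < ‖φ1 (P i') k - ψ (P i') k‖
      · by_cases c2 : ∃ i', ε/4 < ‖φ2 (P i') k - ψ (P i') k‖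
        · -- both recorded; equal rounded values
          simp only [if_pos c1, if_pos c2, Option.some.injEq] at hdk
          have hrndeq := congrFun hdk i
          obtain ⟨r1, hr10, hr11, hval1⟩ := hom_val hPpos hPsum φ1 i k
          obtain ⟨r2, hr20, hr21, hval2⟩ := hom_val hPpos hPsum φ2 i k
          have hmineq : min (⌊4/ε⌋₊) ⌊r1 * (4/ε)⌋₊ = min (⌊4/ε⌋₊) ⌊r2 * (4/ε)⌋₊ := by
            have := congrArg Fin.val hrndeq
            rw [hrnd] at this
            simp only [hval1, hval2] at this
            simpa [hL, Complex.ofReal_re, min_comm] using this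
          have hclose := rnd_close hε hr10 hr11 hr20 hr21 hmineq
          rw [hval1, hval2]
          have : ((r1 : ℂ) - (r2 : ℂ)) = ((r1 - r2 : ℝ) : ℂ) := by push_cast; ring
          rw [this, Complex.norm_real]
          calc |r1 - r2| ≤ ε/4 := hclose
            _ ≤ ε := by linarith
        · simp only [if_pos c1, if_neg c2] at hdk
          exact absurd hdk (by simp)
      · by_cases c2 : ∃ i', ε/4 < ‖φ2 (P i') k - ψ (P i') k‖
        · simp only [if_neg c1, if_pos c2] at hdk
          exact absurd hdk (by simp)
        · push_neg at c1 c2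
          have d1 : ‖φ1 (P i) k - ψ (P i) k‖ ≤ ε/4 := c1 i
          have d2 : ‖φ2 (P i) k - ψ (P i) k‖ ≤ ε/4 := c2 i
          have hsplit : φ1 (P i) k - φ2 (P i) k =
              (φ1 (P i) k - ψ (P i) k) - (φ2 (P i) k - ψ (P i) k) := by ring
          rw [hsplit]
          calc ‖(φ1 (P i) k - ψ (P i) k) - (φ2 (P i) k - ψ (P i) k)‖
              ≤ ‖φ1 (P i) k - ψ (P i) k‖ + ‖φ2 (P i) k - ψ (P i) k‖ := norm_sub_le _ _
            _ ≤ ε/4 + ε/4 := add_le_add d1 d2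
            _ ≤ ε := by linarith
    exact absurd hsep (not_lt.2 hbound)
  have hcard : E.card ≤ t.card * R := by
    calc E.card ≤ (t ×ˢ Rset).card := Finset.card_le_card_of_injOn f hmaps hinj
      _ = t.card * Rset.card := Finset.card_product _ _
      _ ≤ t.card * R := Nat.mul_le_mul_left _ hRsetcard
  calc (E.card : ℕ∞) ≤ ((t.card * R : ℕ) : ℕ∞) := by exact_mod_cast hcard
    _ = (t.card : ℕ∞) * (R : ℕ∞) := by push_cast; rfl
    _ = sepNum S (rhoPartC P) ε' * (R : ℕ∞) := by rw [htcard]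

end Key

/-- Proposition 4.8 (`P-infinity norm`): for a finite partition of unity `P` in `C(X)`,
the topological entropy `h_Σ(P)` can equivalently be computed using the sup-norm
pseudometric `ρ_{P,∞}` in place of `ρ_P`. -/
theorem stmt9
    {X : Type*} [TopologicalSpace X] [CompactSpace X] [TopologicalSpace.MetrizableSpace X]
    {G : Type*} [Group G] [Countable G]
    (T : G → X → X) (hc : ∀ s : G, Continuous (T s))
    (hT1 : T 1 = id) (hTmul : ∀ s t : G, T (s * t) = T s ∘ T t)
    (SA : SoficApprox G)
    {n : ℕ} (P : Fin n → C(X, ℂ))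
    (hPpos : ∀ i x, 0 ≤ P i x) (hPsum : ∑ i, P i = 1) :
    hTopP T hc SA P =
      ⨆ ε : {ε : ℝ // 0 < ε}, ⨅ F : {F : Finset G // F.Nonempty}, ⨅ δ : {δ : ℝ // 0 < δ},
        limsup (fun i => ((((SA.d i : ℝ))⁻¹ : ℝ) : EReal) *
          elog (sepNum (HomTopP T hc P (F : Finset G) (δ : ℝ) (SA.σ i)) (rhoPartCinf P)
            (ε : ℝ))) atTop := by
  classical
  apply le_antisymm
  · -- easy direction: `ρ_P ≤ ρ_{P,∞}` pointwise
    unfold hTopP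
    apply iSup_mono
    intro ε
    apply iInf_mono
    intro F
    apply iInf_mono
    intro δ
    apply Filter.limsup_le_limsup (Filter.Eventually.of_forall ?_)
    intro i
    apply mul_le_mul_of_nonneg_left ?_ (by
      apply EReal.coe_nonneg.2
      positivity)
    apply elog_mono
    exact sepNum_mono_rho (fun x _ y _ => rhoPartC_le_inf x y)
  · -- hard direction
    apply iSup_le
    intro ε
    apply le_of_forall_le_add
    intro η hη
    have hε : (0:ℝ) < (ε:ℝ) := ε.2
    have hC : (0:ℝ) ≤ Real.log ((((⌊4/(ε:ℝ)⌋₊ + 1)^n : ℕ) : ℝ) + 1) := by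
      apply Real.log_nonneg
      have : (0:ℝ) ≤ (((⌊4/(ε:ℝ)⌋₊ + 1)^n : ℕ) : ℝ) := Nat.cast_nonneg _
      linarith
    obtain ⟨κ, hκ0, hκ1, hκη⟩ := exists_kappa η _ hη hC
    set ε' : ℝ := (ε:ℝ) * Real.sqrt (κ/(16*(n+1))) with hε'def
    have hε'pos : 0 < ε' := mul_pos hε (Real.sqrt_pos.2 (by positivity))
    have hκcond : (n:ℝ) * (16 * ε'^2/(ε:ℝ)^2) ≤ κ := by
      have hsq : ε'^2 = (ε:ℝ)^2 * (κ/(16*(n+1))) := by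
        rw [hε'def, mul_pow, Real.sq_sqrt (by positivity)]
      have h16 : 16 * ε'^2 / (ε:ℝ)^2 = κ/(n+1) := by
        rw [hsq]
        have hεne : (ε:ℝ)^2 ≠ 0 := by positivity
        field_simp
      rw [h16, mul_div_assoc']
      rw [div_le_iff₀ (by positivity : (0:ℝ) < (n:ℝ)+1)]
      have hn0 : (0:ℝ) ≤ (n:ℝ) := Nat.cast_nonneg n
      nlinarith
    -- pointwise estimate
    have hpoint : ∀ (F : Finset G) (δ : ℝ) (i : ℕ),
        ((((SA.d i : ℝ))⁻¹ : ℝ) : EReal) *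
            elog (sepNum (HomTopP T hc P F δ (SA.σ i)) (rhoPartCinf P) (ε:ℝ))
          ≤ ((((SA.d i : ℝ))⁻¹ : ℝ) : EReal) *
            elog (sepNum (HomTopP T hc P F δ (SA.σ i)) (rhoPartC P) ε') + (η : EReal) := by
      intro F δ i
      have hd : 0 < SA.d i := SA.d_pos i
      have hkey := key_count hPpos hPsum hε hε'pos hκ0 hκcond (HomTopP T hc P F δ (SA.σ i))
      have h1 : elog (sepNum (HomTopP T hc P F δ (SA.σ i)) (rhoPartCinf P) (ε:ℝ))
          ≤ elog (sepNum (HomTopP T hc P F δ (SA.σ i)) (rhoPartC P) ε') +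
            ((Real.log (((∑ j ∈ Finset.range (⌊κ * (SA.d i)⌋₊ + 1), (SA.d i).choose j) *
              ((⌊4/(ε:ℝ)⌋₊ + 1) ^ n + 1) ^ ⌊κ * (SA.d i)⌋₊ : ℕ) : ℝ) : ℝ) : EReal) :=
        elog_mul_le (one_le_R _ _ _) hkey
      have h2 : Real.log (((∑ j ∈ Finset.range (⌊κ * (SA.d i)⌋₊ + 1), (SA.d i).choose j) *
            ((⌊4/(ε:ℝ)⌋₊ + 1) ^ n + 1) ^ ⌊κ * (SA.d i)⌋₊ : ℕ) : ℝ)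
          ≤ (SA.d i) * (κ * (Real.log (1/κ) +
              Real.log ((((⌊4/(ε:ℝ)⌋₊ + 1)^n : ℕ) : ℝ) + 1)) + Real.log (1+κ)) := by
        have := logR_le hd hκ0 hκ1 ((⌊4/(ε:ℝ)⌋₊ + 1)^n)
        exact_mod_cast this
      have h3 : elog (sepNum (HomTopP T hc P F δ (SA.σ i)) (rhoPartCinf P) (ε:ℝ))
          ≤ elog (sepNum (HomTopP T hc P F δ (SA.σ i)) (rhoPartC P) ε') +
            (((SA.d i) * (κ * (Real.log (1/κ) +
              Real.log ((((⌊4/(ε:ℝ)⌋₊ + 1)^n : ℕ) : ℝ) + 1)) + Real.log (1+κ)) : ℝ) : EReal) :=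
        le_trans h1 (add_le_add_right (EReal.coe_le_coe_iff.2 h2) _)
      have h4 := mul_le_mul_add (c := ((SA.d i : ℝ))⁻¹) (by positivity) h3
      have h5 : ((SA.d i : ℝ))⁻¹ * ((SA.d i) * (κ * (Real.log (1/κ) +
            Real.log ((((⌊4/(ε:ℝ)⌋₊ + 1)^n : ℕ) : ℝ) + 1)) + Real.log (1+κ)))
          = κ * (Real.log (1/κ) +
            Real.log ((((⌊4/(ε:ℝ)⌋₊ + 1)^n : ℕ) : ℝ) + 1)) + Real.log (1+κ) := by
        have hdne : ((SA.d i : ℝ)) ≠ 0 := by positivity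
        field_simp
      rw [h5] at h4
      exact le_trans h4 (add_le_add_right (EReal.coe_le_coe_iff.2 hκη) _)
    have hlim : ∀ (F : {F : Finset G // F.Nonempty}) (δ : {δ : ℝ // 0 < δ}),
        limsup (fun i => ((((SA.d i : ℝ))⁻¹ : ℝ) : EReal) *
            elog (sepNum (HomTopP T hc P (F : Finset G) (δ : ℝ) (SA.σ i)) (rhoPartCinf P)
              (ε:ℝ))) atTop
          ≤ limsup (fun i => ((((SA.d i : ℝ))⁻¹ : ℝ) : EReal) *
            elog (sepNum (HomTopP T hc P (F : Finset G) (δ : ℝ) (SA.σ i)) (rhoPartC P)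
              ε')) atTop + (η : EReal) := by
      intro F δ
      calc limsup (fun i => ((((SA.d i : ℝ))⁻¹ : ℝ) : EReal) *
            elog (sepNum (HomTopP T hc P (F : Finset G) (δ : ℝ) (SA.σ i)) (rhoPartCinf P)
              (ε:ℝ))) atTop
          ≤ limsup (fun i => ((((SA.d i : ℝ))⁻¹ : ℝ) : EReal) *
            elog (sepNum (HomTopP T hc P (F : Finset G) (δ : ℝ) (SA.σ i)) (rhoPartC P)
              ε') + (η : EReal)) atTop :=
            Filter.limsup_le_limsup (Filter.Eventually.of_forall
              (fun i => hpoint (F : Finset G) (δ : ℝ) i))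
        _ = _ := limsup_add_real _ η
    calc (⨅ F : {F : Finset G // F.Nonempty}, ⨅ δ : {δ : ℝ // 0 < δ},
            limsup (fun i => ((((SA.d i : ℝ))⁻¹ : ℝ) : EReal) *
              elog (sepNum (HomTopP T hc P (F : Finset G) (δ : ℝ) (SA.σ i)) (rhoPartCinf P)
                (ε : ℝ))) atTop)
        ≤ ⨅ F : {F : Finset G // F.Nonempty}, ⨅ δ : {δ : ℝ // 0 < δ},
            (limsup (fun i => ((((SA.d i : ℝ))⁻¹ : ℝ) : EReal) *
              elog (sepNum (HomTopP T hc P (F : Finset G) (δ : ℝ) (SA.σ i)) (rhoPartC P)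
                ε')) atTop + (η : EReal)) :=
          iInf_mono fun F => iInf_mono fun δ => hlim F δ
      _ = (⨅ F : {F : Finset G // F.Nonempty}, ⨅ δ : {δ : ℝ // 0 < δ},
            limsup (fun i => ((((SA.d i : ℝ))⁻¹ : ℝ) : EReal) *
              elog (sepNum (HomTopP T hc P (F : Finset G) (δ : ℝ) (SA.σ i)) (rhoPartC P)
                ε')) atTop) + (η : EReal) := by
          rw [← iInf_add_real]
          apply iInf_congr
          intro F
          exact iInf_add_real _ η
      _ ≤ hTopP T hc SA P + (η : EReal) := by
          apply add_le_add_left _ (η : EReal)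
          exact le_iSup (f := fun ε'' : {ε : ℝ // 0 < ε} =>
            ⨅ F : {F : Finset G // F.Nonempty}, ⨅ δ : {δ : ℝ // 0 < δ},
              limsup (fun i => ((((SA.d i : ℝ))⁻¹ : ℝ) : EReal) *
                elog (sepNum (HomTopP T hc P (F : Finset G) (δ : ℝ) (SA.σ i)) (rhoPartC P)
                  (ε'' : ℝ))) atTop) ⟨ε', hε'pos⟩


end Sofic
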